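/- For every fixed c < 1, the limit of f_θ(c) = a(θ)·(exp(−θ·c) − 1) as θ → −∞ equals 0; i.e., for large negative θ the KerBS kernel profile vanishes at every cosine similarity strictly below 1, so the kernel concentrates its mass near perfect alignment. -/

import Mathlib

open Real Filter Topology

private lemma kerbs_aux (c : ℝ) (hc : c < 1) :
    Tendsto (fun t : ℝ =>
        (t / (2 * (Real.exp t - t - 1))) * (Real.exp (t * c) - 1))
      atTop (𝓝 0) := by
  have hbound : Tendsto (fun t : ℝ => t * Real.exp ((c - 1) * t) + t * Real.exp (-t))
      atTop (𝓝 0) := by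
    have h1 : Tendsto (fun t : ℝ => t * Real.exp ((c - 1) * t)) atTop (𝓝 0) := by
      have := tendsto_rpow_mul_exp_neg_mul_atTop_nhds_zero 1 (1 - c) (by linarith)
      refine this.congr' ?_
      filter_upwards [eventually_gt_atTop 0] with t ht
      rw [Real.rpow_one]
      ring_nf
    have h2 : Tendsto (fun t : ℝ => t * Real.exp (-t)) atTop (𝓝 0) := by
      have := tendsto_rpow_mul_exp_neg_mul_atTop_nhds_zero 1 1 one_pos
      refine this.congr' ?_
      filter_upwards [eventually_gt_atTop 0] with t ht
      rw [Real.rpow_one]; ring_nf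
    simpa using h1.add h2
  refine squeeze_zero_norm' ?_ hbound
  filter_upwards [eventually_ge_atTop 6] with t ht
  have hden : Real.exp t / 2 ≤ Real.exp t - t - 1 := by
    have h := Real.add_one_le_exp (t / 2)
    have h2 : Real.exp t = Real.exp (t / 2) * Real.exp (t / 2) := by
      rw [← Real.exp_add]; ring_nf
    nlinarith [Real.exp_pos (t / 2)]
  have hdenpos : (0:ℝ) < Real.exp t - t - 1 := by
    have := Real.exp_pos t; linarith
  have ht0 : (0:ℝ) ≤ t := by linarith
  have hnum : |Real.exp (t * c) - 1| ≤ Real.exp (t * c) + 1 := by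
    have := Real.exp_pos (t * c)
    rw [abs_le]; constructor <;> linarith
  rw [Real.norm_eq_abs, abs_mul, abs_div, abs_of_nonneg ht0,
    abs_of_pos (by positivity : (0:ℝ) < 2 * (Real.exp t - t - 1))]
  have key : t / (2 * (Real.exp t - t - 1)) * |Real.exp (t * c) - 1|
      ≤ t * (Real.exp (t * c) + 1) / Real.exp t := by
    rw [div_mul_eq_mul_div, div_le_div_iff₀ (by positivity) (Real.exp_pos t)]
    have h1 : t * |Real.exp (t * c) - 1| * Real.exp t
        ≤ t * (Real.exp (t * c) + 1) * Real.exp t := by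
      exact mul_le_mul_of_nonneg_right (mul_le_mul_of_nonneg_left hnum ht0)
        (Real.exp_pos t).le
    have h2 : t * (Real.exp (t * c) + 1) * Real.exp t
        ≤ t * (Real.exp (t * c) + 1) * (2 * (Real.exp t - t - 1)) := by
      have hx : (0:ℝ) ≤ t * (Real.exp (t * c) + 1) := by positivity
      have : Real.exp t ≤ 2 * (Real.exp t - t - 1) := by linarith
      exact mul_le_mul_of_nonneg_left this hx
    linarith
  refine key.trans (le_of_eq ?_)
  have hsplit : t * (Real.exp (t * c) + 1) / Real.exp t
      = t * (Real.exp (t * c) / Real.exp t) + t * (1 / Real.exp t) := by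
    field_simp
  rw [hsplit, ← Real.exp_sub, one_div, ← Real.exp_neg]
  ring_nf

/-- For every fixed `c < 1`, the limit of `f_θ(c) = a(θ)·(exp(-θ·c) − 1)` as
`θ → -∞` equals `0`, where `a(θ) = -θ/(2(exp(-θ)+θ-1))`: for large negative `θ`
the KerBS kernel profile vanishes at every cosine similarity strictly below `1`. -/
theorem kerbs_profile_tendsto_zero_atBot (c : ℝ) (hc : c < 1) :
    Tendsto (fun θ : ℝ =>
        (-θ / (2 * (Real.exp (-θ) + θ - 1))) * (Real.exp (-θ * c) - 1))
      atBot (𝓝 0) := by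
  have h := (kerbs_aux c hc).comp tendsto_neg_atBot_atTop
  refine h.congr fun θ => ?_
  simp only [Function.comp]
  ring_nf
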